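/- (Value of F_n(s)⁴ R_{ρ_{2(n−1)}}(s)² at s = 0.) Let n ∈ ℕ with n ≥ 1 and define Φ_n(s) = ( 𝒵(2(n−1))(s − n + 1) · 𝒵(−2n)(s + n) ) / ( 𝒵(−2(n−1))(s + n + 1) · 𝒵(2n)(s − n + 2) ), which on Re(s) > n + 1 agrees with F_n(s)² R_{ρ_{2(n−1)}}(s). Then the function s ↦ Φ_n(s)², restricted to the set of s where 𝒵(−2(n−1))(s + n + 1) ≠ 0 and 𝒵(2n)(s − n + 2) ≠ 0, tends to exp( −(2/π)·(2n² − 2n + 1/3)·V − 2πi·(η(2n) − η(2(n−1))) ) as s → 0 within that set. -/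

import Mathlib

/-- `R(σ_k, s) = ∏_{i ∈ I} (1 − e^{i(k/2)θ_i} e^{−s ℓ_i})`. -/
noncomputable def Rz {I : Type*} (ℓ θ : I → ℝ) (k : ℤ) (s : ℂ) : ℂ :=
  ∏' i : I, (1 - Complex.exp (Complex.I * ((k : ℂ) / 2) * (θ i : ℂ))
    * Complex.exp (-s * (ℓ i : ℂ)))

/-- Selberg zeta function
`Z(σ_k, s) = ∏_{i ∈ I} ∏_{p,q ≥ 0} (1 − e^{i(k/2)θ_i} e^{−p(ℓ_i+iθ_i)} e^{−q(ℓ_i−iθ_i)} e^{−s ℓ_i})`. -/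
noncomputable def Zs {I : Type*} (ℓ θ : I → ℝ) (k : ℤ) (s : ℂ) : ℂ :=
  ∏' x : I × ℕ × ℕ,
    (1 - Complex.exp (Complex.I * ((k : ℂ) / 2) * (θ x.1 : ℂ))
       * Complex.exp (-(x.2.1 : ℂ) * ((ℓ x.1 : ℂ) + Complex.I * (θ x.1 : ℂ)))
       * Complex.exp (-(x.2.2 : ℂ) * ((ℓ x.1 : ℂ) - Complex.I * (θ x.1 : ℂ)))
       * Complex.exp (-s * (ℓ x.1 : ℂ)))

open Filter in
/-- If `g` is analytic at `0`, then `(g(-s)/g(s))²` tends to `1` as `s → 0` within any set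
on which `g` is nonvanishing. -/
lemma quotSq_tendsto (g : ℂ → ℂ) (hg : AnalyticAt ℂ g 0) (S : Set ℂ)
    (hS : ∀ s ∈ S, g s ≠ 0) :
    Tendsto (fun s => (g (-s) / g s) ^ 2) (nhdsWithin 0 S) (nhds 1) := by
  rcases (nhdsWithin (0:ℂ) S).eq_or_neBot with hbot | hne
  · rw [hbot]; exact Filter.tendsto_bot
  by_cases hord : analyticOrderAt g 0 = ⊤
  · exfalso
    have hz := analyticOrderAt_eq_top.mp hord
    have hfreq : ∃ᶠ x in nhds (0:ℂ), x ∈ S :=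
      mem_closure_iff_frequently.mp (mem_closure_iff_nhdsWithin_neBot.mpr hne)
    obtain ⟨x, hxS, hx0⟩ := (hfreq.and_eventually hz).exists
    exact hS x hxS hx0
  obtain ⟨m, hm⟩ := Option.ne_none_iff_exists'.mp hord
  obtain ⟨h, hha, hh0, hev⟩ := (hg.analyticOrderAt_eq_natCast (n := m)).mp hm
  have hev' : ∀ᶠ z in nhds (0:ℂ), g z = z ^ m * h z := by
    filter_upwards [hev] with z hz
    simpa [smul_eq_mul] using hz
  have hnegt : Tendsto (fun s : ℂ => -s) (nhds 0) (nhds 0) := by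
    simpa using (continuous_neg.tendsto (0:ℂ))
  have hevn : ∀ᶠ s in nhds (0:ℂ), g (-s) = (-s) ^ m * h (-s) := hnegt.eventually hev'
  have hcont : ContinuousAt h 0 := hha.continuousAt
  have h1 : Tendsto (fun s : ℂ => (h (-s)) ^ 2) (nhdsWithin 0 S) (nhds ((h 0) ^ 2)) := by
    have : Tendsto (fun s : ℂ => h (-s)) (nhds 0) (nhds (h 0)) := hcont.tendsto.comp hnegt
    exact ((this.pow 2).mono_left nhdsWithin_le_nhds)
  have h2 : Tendsto (fun s : ℂ => (h s) ^ 2) (nhdsWithin 0 S) (nhds ((h 0) ^ 2)) :=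
    ((hcont.tendsto.pow 2).mono_left nhdsWithin_le_nhds)
  have hmain : Tendsto (fun s : ℂ => (h (-s)) ^ 2 / (h s) ^ 2) (nhdsWithin 0 S) (nhds 1) := by
    have := h1.div h2 (pow_ne_zero 2 hh0)
    rw [div_self (pow_ne_zero 2 hh0)] at this; exact this
  apply hmain.congr'
  filter_upwards [hev'.filter_mono nhdsWithin_le_nhds, hevn.filter_mono nhdsWithin_le_nhds,
    eventually_mem_nhdsWithin] with s hgs hgns hsS
  have hg0 : g s ≠ 0 := hS s hsS
  rw [hgs] at hg0
  have hsm : (s : ℂ) ^ m ≠ 0 := fun hh => hg0 (by rw [hh, zero_mul])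
  rw [div_pow, hgns, hgs, mul_pow, mul_pow,
    show ((-s) ^ m) ^ 2 = (s ^ m) ^ 2 by
      rw [← pow_mul, ← pow_mul]; exact Even.neg_pow ⟨m, by ring⟩ s,
    mul_div_mul_left _ _ (pow_ne_zero 2 hsm)]

/-- Denominator function. -/
noncomputable def Gaux (𝒵 : ℤ → ℂ → ℂ) (n : ℕ) (s : ℂ) : ℂ :=
  𝒵 (-2 * ((n : ℤ) - 1)) (s + (n : ℂ) + 1) * 𝒵 (2 * (n : ℤ)) (s - (n : ℂ) + 2)

/-- Exponential prefactor coming from the functional equation. -/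
noncomputable def Caux (V : ℝ) (η : ℤ → ℝ) (n : ℕ) (s : ℂ) : ℂ :=
  Complex.exp (Complex.I * (Real.pi : ℂ) * ((η (2 * ((n : ℤ) - 1)) : ℝ) : ℂ)) *
    Complex.exp (((V : ℂ) / (Real.pi : ℂ)) *
      ((s - (n : ℂ)) ^ 3 / 3 - ((2 * ((n : ℤ) - 1) : ℤ) : ℂ) ^ 2 * (s - (n : ℂ)) / 4)) *
  (Complex.exp (Complex.I * (Real.pi : ℂ) * ((η (-2 * (n : ℤ)) : ℝ) : ℂ)) *
    Complex.exp (((V : ℂ) / (Real.pi : ℂ)) *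
      ((s + (n : ℂ) - 1) ^ 3 / 3 - ((-2 * (n : ℤ) : ℤ) : ℂ) ^ 2 * (s + (n : ℂ) - 1) / 4)))

/-- limit value of `F_n(s)⁴ R_{ρ_{2(n−1)}}(s)²` at `s = 0`, expressed through the
entire extensions `𝒵 k` of the Selberg zeta functions. -/
theorem statement12 {I : Type*} [Countable I] (ℓ θ : I → ℝ)
    (hℓ : ∀ i, 0 < ℓ i) (δ : ℝ) (hδ : δ < 2)
    (hsum : Summable fun i => Real.exp (-δ * ℓ i))
    (V : ℝ) (hV : 0 < V) (η : ℤ → ℝ) (𝒵 : ℤ → ℂ → ℂ)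
    (hentire : ∀ k : ℤ, Differentiable ℂ (𝒵 k))
    (hagree : ∀ (k : ℤ) (s : ℂ), 2 < s.re → 𝒵 k s = Zs ℓ θ k s)
    (hfe : ∀ (k : ℤ) (s : ℂ), 𝒵 k (1 + s) =
      Complex.exp (Complex.I * (Real.pi : ℂ) * (η k : ℂ)) *
      Complex.exp (((V : ℂ) / (Real.pi : ℂ)) * (s ^ 3 / 3 - (k : ℂ) ^ 2 * s / 4)) *
      𝒵 (-k) (1 - s))
    (n : ℕ) (hn : 1 ≤ n) :
    Filter.Tendsto
      (fun s : ℂ =>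
        ((𝒵 (2 * ((n : ℤ) - 1)) (s - (n : ℂ) + 1) * 𝒵 (-2 * (n : ℤ)) (s + (n : ℂ))) /
         (𝒵 (-2 * ((n : ℤ) - 1)) (s + (n : ℂ) + 1) * 𝒵 (2 * (n : ℤ)) (s - (n : ℂ) + 2))) ^ 2)
      (nhdsWithin 0 {s : ℂ | 𝒵 (-2 * ((n : ℤ) - 1)) (s + (n : ℂ) + 1) ≠ 0 ∧
        𝒵 (2 * (n : ℤ)) (s - (n : ℂ) + 2) ≠ 0})
      (nhds (Complex.exp
        (-(2 / (Real.pi : ℂ)) * (2 * (n : ℂ) ^ 2 - 2 * (n : ℂ) + 1 / 3) * (V : ℂ) -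
          2 * (Real.pi : ℂ) * Complex.I *
            ((η (2 * (n : ℤ)) : ℂ) - (η (2 * ((n : ℤ) - 1)) : ℂ))))) := by
  classical
  set S : Set ℂ := {s : ℂ | 𝒵 (-2 * ((n : ℤ) - 1)) (s + (n : ℂ) + 1) ≠ 0 ∧
      𝒵 (2 * (n : ℤ)) (s - (n : ℂ) + 2) ≠ 0} with hSdef
  rcases (nhdsWithin (0:ℂ) S).eq_or_neBot with hbot | hne
  · rw [hbot]; exact Filter.tendsto_bot
  -- `S` is nonempty
  have hcl : (0:ℂ) ∈ closure S := mem_closure_iff_nhdsWithin_neBot.mpr hne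
  have hSne : S.Nonempty := by
    by_contra hcon
    rw [Set.not_nonempty_iff_eq_empty] at hcon
    rw [hcon, closure_empty] at hcl
    exact hcl
  obtain ⟨s₀, hs₀⟩ := hSne
  have hπ : ((Real.pi : ℝ) : ℂ) ≠ 0 := Complex.ofReal_ne_zero.mpr Real.pi_ne_zero
  -- the eta identity `exp(iπη(-2n)) = exp(-iπη(2n))`
  have hb : Complex.exp (Complex.I * (Real.pi : ℂ) * ((η (-2 * (n : ℤ)) : ℝ) : ℂ))
      = Complex.exp (-(Complex.I * (Real.pi : ℂ) * ((η (2 * (n : ℤ)) : ℝ) : ℂ))) := by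
    set w : ℂ := s₀ - (n : ℂ) + 1 with hw
    have h1 := hfe (2 * (n : ℤ)) w
    have h2 := hfe (-2 * (n : ℤ)) (-w)
    rw [show (1:ℂ) + -w = 1 - w by ring, show (-(-2 * (n : ℤ))) = 2 * (n : ℤ) by ring,
      show (1:ℂ) - -w = 1 + w by ring] at h2
    rw [show (-(2 * (n : ℤ))) = -2 * (n : ℤ) by ring] at h1
    have hPQ : Complex.exp (((V : ℂ) / (Real.pi : ℂ)) *
          (w ^ 3 / 3 - ((2 * (n : ℤ) : ℤ) : ℂ) ^ 2 * w / 4)) *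
        Complex.exp (((V : ℂ) / (Real.pi : ℂ)) *
          ((-w) ^ 3 / 3 - ((-2 * (n : ℤ) : ℤ) : ℂ) ^ 2 * (-w) / 4)) = 1 := by
      rw [← Complex.exp_add,
        show (((V : ℂ) / (Real.pi : ℂ)) * (w ^ 3 / 3 - ((2 * (n : ℤ) : ℤ) : ℂ) ^ 2 * w / 4)) +
            (((V : ℂ) / (Real.pi : ℂ)) *
              ((-w) ^ 3 / 3 - ((-2 * (n : ℤ) : ℤ) : ℂ) ^ 2 * (-w) / 4)) = 0 by push_cast; ring,
        Complex.exp_zero]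
    set a := Complex.exp (Complex.I * (Real.pi : ℂ) * ((η (2 * (n : ℤ)) : ℝ) : ℂ)) with ha
    set b := Complex.exp (Complex.I * (Real.pi : ℂ) * ((η (-2 * (n : ℤ)) : ℝ) : ℂ)) with hbb
    set p := Complex.exp (((V : ℂ) / (Real.pi : ℂ)) *
      (w ^ 3 / 3 - ((2 * (n : ℤ) : ℤ) : ℂ) ^ 2 * w / 4)) with hp
    set q := Complex.exp (((V : ℂ) / (Real.pi : ℂ)) *
      ((-w) ^ 3 / 3 - ((-2 * (n : ℤ) : ℤ) : ℂ) ^ 2 * (-w) / 4)) with hq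
    rw [h2] at h1
    have hZne : 𝒵 (2 * (n : ℤ)) (1 + w) ≠ 0 := by
      rw [show (1:ℂ) + w = s₀ - (n : ℂ) + 2 by rw [hw]; ring]
      exact hs₀.2
    have h3 : 𝒵 (2 * (n : ℤ)) (1 + w) = (a * b) * 𝒵 (2 * (n : ℤ)) (1 + w) := by
      linear_combination h1 + a * b * 𝒵 (2 * (n : ℤ)) (1 + w) * hPQ
    have hAB : a * b = 1 := mul_right_cancel₀ hZne (by rw [one_mul, ← h3])
    rw [Complex.exp_neg]
    exact eq_inv_of_mul_eq_one_left (by rw [mul_comm] at hAB; exact hAB)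
  -- the functional-equation rewrite of the numerator
  have hN : ∀ s : ℂ,
      𝒵 (2 * ((n : ℤ) - 1)) (s - (n : ℂ) + 1) * 𝒵 (-2 * (n : ℤ)) (s + (n : ℂ)) =
      Caux V η n s * Gaux 𝒵 n (-s) := by
    intro s
    have e1 := hfe (2 * ((n : ℤ) - 1)) (s - (n : ℂ))
    have e2 := hfe (-2 * (n : ℤ)) (s + (n : ℂ) - 1)
    rw [show (1:ℂ) + (s - (n : ℂ)) = s - (n : ℂ) + 1 by ring,
      show (-(2 * ((n : ℤ) - 1))) = -2 * ((n : ℤ) - 1) by ring,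
      show (1:ℂ) - (s - (n : ℂ)) = -s + (n : ℂ) + 1 by ring] at e1
    rw [show (1:ℂ) + (s + (n : ℂ) - 1) = s + (n : ℂ) by ring,
      show (-(-2 * (n : ℤ))) = 2 * (n : ℤ) by ring,
      show (1:ℂ) - (s + (n : ℂ) - 1) = -s - (n : ℂ) + 2 by ring] at e2
    rw [e1, e2]
    unfold Caux Gaux
    ring
  -- limit of the prefactor
  have hCc : Continuous (Caux V η n) := by
    unfold Caux; fun_prop
  have hCt : Filter.Tendsto (fun s : ℂ => Caux V η n s ^ 2) (nhdsWithin 0 S)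
      (nhds (Caux V η n 0 ^ 2)) :=
    ((hCc.pow 2).tendsto 0).mono_left nhdsWithin_le_nhds
  -- limit of the quotient
  have hGa : AnalyticAt ℂ (Gaux 𝒵 n) 0 := by
    have : Differentiable ℂ (Gaux 𝒵 n) := by
      unfold Gaux
      exact ((hentire _).comp (by fun_prop)).mul ((hentire _).comp (by fun_prop))
    exact this.analyticAt 0
  have hq : Filter.Tendsto (fun s : ℂ => (Gaux 𝒵 n (-s) / Gaux 𝒵 n s) ^ 2)
      (nhdsWithin 0 S) (nhds 1) := by
    apply quotSq_tendsto _ hGa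
    intro s hs
    exact mul_ne_zero hs.1 hs.2
  have main := hCt.mul hq
  -- identify the constant
  have hconst : Caux V η n 0 ^ 2 * 1 = Complex.exp
      (-(2 / (Real.pi : ℂ)) * (2 * (n : ℂ) ^ 2 - 2 * (n : ℂ) + 1 / 3) * (V : ℂ) -
        2 * (Real.pi : ℂ) * Complex.I *
          ((η (2 * (n : ℤ)) : ℂ) - (η (2 * ((n : ℤ) - 1)) : ℂ))) := by
    unfold Caux
    rw [hb, mul_one, ← Complex.exp_add, ← Complex.exp_add, ← Complex.exp_add, sq,
      ← Complex.exp_add]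
    congr 1
    push_cast
    field_simp
    ring
  rw [hconst] at main
  apply main.congr'
  apply Filter.Eventually.of_forall
  intro s
  beta_reduce
  rw [hN s, show (𝒵 (-2 * ((n : ℤ) - 1)) (s + (n : ℂ) + 1) *
      𝒵 (2 * (n : ℤ)) (s - (n : ℂ) + 2)) = Gaux 𝒵 n s from rfl,
    mul_div_assoc, mul_pow]
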